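/- There exists a typical hesitant fuzzy language f: Σ* → ℍ that is not computed by any nondeterministic typical hesitant fuzzy automaton; in particular, f(w) = ⋃_{i=0}^{|w|} {1/(2^i + 1)} has infinite range and hence f ∉ 𝕋_R. -/

import Mathlib

open unitInterval

/-- ℍ: the set of all finite nonempty subsets of [0,1], modeled as
nonempty finsets of the unit interval. -/
abbrev TH := {X : Finset I // X.Nonempty}

/-- inf-combination: X ⊗ Y = {min x y | x ∈ X, y ∈ Y} -/
noncomputable def hinf (X Y : TH) : TH :=
  ⟨Finset.image₂ min X.1 Y.1, X.2.image₂ Y.2⟩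

/-- sup-combination: X ⊔ Y = {max x y | x ∈ X, y ∈ Y} -/
noncomputable def hsup (X Y : TH) : TH :=
  ⟨Finset.image₂ max X.1 Y.1, X.2.image₂ Y.2⟩

/-- the element {1} -/
noncomputable def hone : TH := ⟨{1}, Finset.singleton_nonempty 1⟩

/-- the element {0} -/
noncomputable def hzero : TH := ⟨{0}, Finset.singleton_nonempty 0⟩

/-- the order X ⊑ Y  iff  X ⊔ Y = Y -/
def hle (X Y : TH) : Prop := hsup X Y = Y

instance : Std.Commutative hsup := ⟨fun X Y => Subtype.ext (by
  simpa [hsup] using Finset.image₂_comm (f := max (α := I)) (g := max)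
    (fun a b => max_comm a b))⟩

instance : Std.Associative hsup := ⟨fun X Y Z => Subtype.ext (by
  simp only [hsup]
  exact Finset.image₂_assoc (f := max (α := I)) (g := max) (f' := max) (g' := max)
    (fun a b c => max_assoc a b c))⟩

/-- Iterated sup-combination ⊔_{b ∈ s} f b (it equals {0} on the empty set). -/
noncomputable def bigHsup {β : Type*} (s : Finset β) (f : β → TH) : TH :=
  s.fold hsup hzero f

/-- The extension ψ̂ of the typical hesitant fuzzy transition relation ψ of an
NTHFA to words: ψ̂(q, λ, q') = {1} if q = q' and {0} otherwise, and
ψ̂ on longer words is obtained by sup-combining over intermediate states. -/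
noncomputable def psihat {Q α : Type} [Fintype Q] [DecidableEq Q]
    (ψ : Q → α → Q → TH) : Q → List α → Q → TH
  | q, [], q' => if q = q' then hone else hzero
  | q, a :: w, q' =>
      bigHsup Finset.univ fun q'' => hinf (ψ q a q'') (psihat ψ q'' w q')

/-- The THFL computed by the NTHFA ⟨Q, α, ψ, q₀, F⟩:
f(w) = ⊔_{q ∈ Q} (ψ̂(q₀, w, q) ⊗ F(q)). -/
noncomputable def nthfaLang {Q α : Type} [Fintype Q] [DecidableEq Q]
    (ψ : Q → α → Q → TH) (q0 : Q) (F : Q → TH) (w : List α) : TH :=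
  bigHsup Finset.univ fun q => hinf (psihat ψ q0 w q) (F q)

/-- f ∈ 𝕋_R : f is computed by some nondeterministic typical hesitant fuzzy automaton. -/
def InTR {α : Type} (f : List α → TH) : Prop :=
  ∃ (Q : Type) (_ : Fintype Q) (_ : DecidableEq Q) (_ : Nonempty Q)
    (ψ : Q → α → Q → TH) (q0 : Q) (F : Q → TH),
    ∀ w, f w = nthfaLang ψ q0 F w

/-- 1/(2^i + 1) as an element of [0,1]. -/
noncomputable def elt (i : ℕ) : I :=
  ⟨1 / (2 ^ i + 1), by
    constructor
    · positivity
    · rw [div_le_one (by positivity)]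
      have : (1 : ℝ) ≤ 2 ^ i := one_le_pow₀ (by norm_num)
      linarith⟩

/-- The THFL f(w) = ⋃_{i=0}^{|w|} {1/(2^i+1)}. -/
noncomputable def fWitness {α : Type} (w : List α) : TH :=
  ⟨(Finset.range (w.length + 1)).image elt, by
    refine Finset.Nonempty.image ?_ _
    exact Finset.nonempty_range_iff.mpr (Nat.succ_ne_zero _)⟩

/-- There is a THFL not computed by any NTHFA; in particular the THFL
f(w) = ⋃_{i=0}^{|w|} {1/(2^i+1)} is not in 𝕋_R. -/
lemma hinf_subset {E : Finset I} {X Y : TH} (hX : X.1 ⊆ E) (hY : Y.1 ⊆ E) :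
    (hinf X Y).1 ⊆ E := by
  intro z hz
  simp only [hinf, Finset.mem_image₂] at hz
  obtain ⟨x, hx, y, hy, rfl⟩ := hz
  rcases min_choice x y with h | h <;> rw [h]
  exacts [hX hx, hY hy]

lemma hsup_subset {E : Finset I} {X Y : TH} (hX : X.1 ⊆ E) (hY : Y.1 ⊆ E) :
    (hsup X Y).1 ⊆ E := by
  intro z hz
  simp only [hsup, Finset.mem_image₂] at hz
  obtain ⟨x, hx, y, hy, rfl⟩ := hz
  rcases max_choice x y with h | h <;> rw [h]
  exacts [hX hx, hY hy]

lemma bigHsup_subset {β : Type*} [DecidableEq β] {s : Finset β} {f : β → TH} {E : Finset I}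
    (h0 : hzero.1 ⊆ E) (hf : ∀ b ∈ s, (f b).1 ⊆ E) : (bigHsup s f).1 ⊆ E := by
  induction s using Finset.induction_on with
  | empty => simpa [bigHsup] using h0
  | @insert b s hbs ih =>
    rw [bigHsup, Finset.fold_insert hbs]
    exact hsup_subset (hf b (Finset.mem_insert_self _ _))
      (ih fun c hc => hf c (Finset.mem_insert_of_mem hc))

lemma elt_injective : Function.Injective elt := by
  intro i j h
  have h' : (1 : ℝ) / (2 ^ i + 1) = 1 / (2 ^ j + 1) := congrArg Subtype.val h
  field_simp at h'
  exact pow_right_injective₀ (by norm_num : (0:ℝ) < 2) (by norm_num) (by linarith)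

theorem stmt15 {α : Type} [Nonempty α] :
    ¬ InTR (fWitness (α := α)) ∧ ∃ f : List α → TH, ¬ InTR f := by
  have key : ¬ InTR (fWitness (α := α)) := by
    rintro ⟨Q, _, _, _, ψ, q0, F, hf⟩
    obtain ⟨a⟩ := ‹Nonempty α›
    set E : Finset I :=
      ({0, 1} : Finset I) ∪ Finset.univ.biUnion (fun p : Q × Q => (ψ p.1 a p.2).1)
        ∪ Finset.univ.biUnion (fun q : Q => (F q).1) with hE
    have hzE : hzero.1 ⊆ E := by
      intro z hz
      simp only [hzero, Finset.mem_singleton] at hz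
      subst hz
      simp [hE]
    have hoE : hone.1 ⊆ E := by
      intro z hz
      simp only [hone, Finset.mem_singleton] at hz
      subst hz
      simp [hE]
    have hψE : ∀ q q', (ψ q a q').1 ⊆ E := by
      intro q q' z hz
      simp only [hE, Finset.mem_union, Finset.mem_biUnion]
      exact Or.inl (Or.inr ⟨(q, q'), Finset.mem_univ _, hz⟩)
    have hFE : ∀ q, (F q).1 ⊆ E := by
      intro q z hz
      simp only [hE, Finset.mem_union, Finset.mem_biUnion]
      exact Or.inr ⟨q, Finset.mem_univ _, hz⟩
    have hpsi : ∀ n q q', (psihat ψ q (List.replicate n a) q').1 ⊆ E := by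
      intro n
      induction n with
      | zero =>
        intro q q'
        simp only [List.replicate, psihat]
        split <;> [exact hoE; exact hzE]
      | succ n ih =>
        intro q q'
        rw [List.replicate_succ]
        exact bigHsup_subset hzE fun q'' _ => hinf_subset (hψE _ _) (ih _ _)
    have hlang : ∀ n, (fWitness (List.replicate n a)).1 ⊆ E := by
      intro n
      rw [hf]
      exact bigHsup_subset hzE fun q _ => hinf_subset (hpsi n _ _) (hFE q)
    have hmem : ∀ n, elt n ∈ E := by
      intro n
      apply hlang n
      simp only [fWitness, Finset.mem_image]
      exact ⟨n, Finset.mem_range.mpr (by simp), rfl⟩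
    have : (Set.range elt).Finite :=
      E.finite_toSet.subset (by rintro _ ⟨n, rfl⟩; exact hmem n)
    exact (Set.infinite_range_of_injective elt_injective) this
  exact ⟨key, fWitness, key⟩
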